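/- (Löwner–John shrinkage) Let n ≥ 1 and let C ⊆ ℝⁿ be a compact convex set with nonempty interior. Suppose c ∈ ℝⁿ and P is a symmetric positive definite n×n matrix such that C ⊆ E(c,P) and E(c,P) has minimum volume among all ellipsoids containing C, i.e., for every c' ∈ ℝⁿ and symmetric positive definite Q with C ⊆ E(c',Q) one has det P ≤ det Q. Then the ellipsoid shrunk by a factor n about its center is contained in C: {c + (1/n)(y − c) : y ∈ E(c,P)} ⊆ C ⊆ E(c,P). -/

import Mathlib

open Matrix

section aux
variable {m : Type*} [Fintype m] [DecidableEq m]

lemma aux_vmv_mulVec (u v x : m → ℝ) : vecMulVec u v *ᵥ x = (v ⬝ᵥ x) • u := by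
  ext i
  simp [vecMulVec_apply, mulVec, dotProduct, Finset.sum_mul, Finset.mul_sum, mul_comm,
    mul_left_comm, mul_assoc]

lemma aux_mul_vmv (M : Matrix m m ℝ) (u v : m → ℝ) :
    M * vecMulVec u v = vecMulVec (M *ᵥ u) v := by
  ext i j
  simp [mul_apply, vecMulVec_apply, mulVec, dotProduct, Finset.sum_mul, mul_assoc]

lemma aux_vmv_mul (u v : m → ℝ) (M : Matrix m m ℝ) :
    vecMulVec u v * M = vecMulVec u (Mᵀ *ᵥ v) := by
  ext i j
  simp [mul_apply, vecMulVec_apply, mulVec, transpose_apply, dotProduct, Finset.mul_sum,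
    mul_comm, mul_left_comm, mul_assoc]

lemma aux_vmv_mul_vmv (u v x y : m → ℝ) :
    vecMulVec u v * vecMulVec x y = (v ⬝ᵥ x) • vecMulVec u y := by
  ext i j
  simp [mul_apply, vecMulVec_apply, dotProduct, Finset.sum_mul, Finset.mul_sum, mul_comm,
    mul_left_comm, mul_assoc]

lemma aux_vmv_transpose (u v : m → ℝ) : (vecMulVec u v)ᵀ = vecMulVec v u := by
  ext i j; simp [vecMulVec_apply, mul_comm]

lemma aux_smul_vmv (r : ℝ) (u v : m → ℝ) : r • vecMulVec u v = vecMulVec (r • u) v := by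
  ext i j; simp [vecMulVec_apply, mul_assoc]

lemma aux_dot_sym {M : Matrix m m ℝ} (hM : Mᵀ = M) (u v : m → ℝ) :
    u ⬝ᵥ (M *ᵥ v) = v ⬝ᵥ (M *ᵥ u) := by
  rw [dotProduct_mulVec, ← mulVec_transpose, hM, dotProduct_comm]

lemma aux_sym_of_posdef {M : Matrix m m ℝ} (hM : M.PosDef) : Mᵀ = M := by
  have h := hM.1
  rwa [Matrix.IsHermitian, conjTranspose_eq_transpose_of_trivial] at h

lemma aux_posdef_apply {M : Matrix m m ℝ} (hM : M.PosDef) {x : m → ℝ} (hx : x ≠ 0) :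
    0 < x ⬝ᵥ (M *ᵥ x) := by
  simpa using hM.dotProduct_mulVec_pos hx

lemma aux_cs {M : Matrix m m ℝ} (hM : M.PosDef) (u v : m → ℝ) :
    (u ⬝ᵥ (M *ᵥ v)) ^ 2 ≤ (u ⬝ᵥ (M *ᵥ u)) * (v ⬝ᵥ (M *ᵥ v)) := by
  rcases eq_or_ne u 0 with rfl | hu
  · simp
  have hsym := aux_sym_of_posdef hM
  set p := u ⬝ᵥ (M *ᵥ u) with hp
  set q := u ⬝ᵥ (M *ᵥ v) with hq
  have hppos : 0 < p := aux_posdef_apply hM hu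
  have key : 0 ≤ (p • v - q • u) ⬝ᵥ (M *ᵥ (p • v - q • u)) := by
    rcases eq_or_ne (p • v - q • u) 0 with h0 | h0
    · rw [h0]; simp
    · exact (aux_posdef_apply hM h0).le
  have hvu : v ⬝ᵥ (M *ᵥ u) = q := by rw [hq, aux_dot_sym hsym]
  have expand : (p • v - q • u) ⬝ᵥ (M *ᵥ (p • v - q • u))
      = p * (p * (v ⬝ᵥ (M *ᵥ v)) - q ^ 2) := by
    simp only [mulVec_sub, mulVec_smul, sub_dotProduct, dotProduct_sub, smul_dotProduct,
      dotProduct_smul, smul_eq_mul, hvu, ← hp, ← hq]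
    ring
  rw [expand] at key
  nlinarith [key, hppos]

lemma aux_dim1 {n : ℕ} (hn : n = 1) (P : Matrix (Fin n) (Fin n) ℝ) (hP : P.PosDef)
    (a e : Fin n → ℝ) :
    (e ⬝ᵥ (P⁻¹ *ᵥ e)) * (a ⬝ᵥ (P *ᵥ a)) = (a ⬝ᵥ e) ^ 2 := by
  subst hn
  have hdet : (0:ℝ) < P.det := hP.det_pos
  have hP00 : P 0 0 ≠ 0 := by rw [det_fin_one] at hdet; exact hdet.ne'
  have hinv : P⁻¹ = (P 0 0)⁻¹ • (1 : Matrix (Fin 1) (Fin 1) ℝ) := by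
    rw [Matrix.inv_def, Matrix.adjugate_fin_one, det_fin_one, Ring.inverse_eq_inv']
  rw [hinv]
  simp [dotProduct, mulVec, Fin.sum_univ_one, Matrix.one_apply]
  field_simp

lemma aux_expand (Pi : Matrix m m ℝ) (a w e : m → ℝ) (b2i mu k q g s : ℝ)
    (h1 : e ⬝ᵥ (Pi *ᵥ w) = g) (h2 : w ⬝ᵥ (Pi *ᵥ e) = g) (h3 : w ⬝ᵥ (Pi *ᵥ w) = s)
    (h4 : a ⬝ᵥ w = s) (h5 : e ⬝ᵥ (Pi *ᵥ e) = q) (h6 : a ⬝ᵥ e = g) :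
    (e - k • w) ⬝ᵥ ((b2i • Pi + mu • vecMulVec a a) *ᵥ (e - k • w))
      = b2i * (q - 2 * k * g + k ^ 2 * s) + mu * (g - k * s) ^ 2 := by
  rw [add_mulVec, smul_mulVec, smul_mulVec, aux_vmv_mulVec]
  simp only [mulVec_sub, mulVec_smul, sub_dotProduct, dotProduct_sub, dotProduct_add,
    dotProduct_smul, smul_dotProduct, smul_eq_mul, dotProduct_comm w a, dotProduct_comm e a,
    h1, h2, h3, h4, h5, h6]
  ring

end aux

lemma aux_A2B2 {N m : ℝ} (hN : 2 ≤ N) (hm1 : -1 < m) (hmN : N * m < 1) :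
    (N * (1 + m) / (N + 1)) ^ 2 ≤ N ^ 2 * (1 - m ^ 2) / (N ^ 2 - 1) := by
  have hm2 : m < 1 := by nlinarith
  have hne1 : N + 1 ≠ 0 := by intro h; nlinarith [h]
  have hne2 : N - 1 ≠ 0 := by intro h; nlinarith [h]
  have hne3 : N ^ 2 - 1 ≠ 0 := by intro h; nlinarith [h]
  have hsub : N ^ 2 * (1 - m ^ 2) / (N ^ 2 - 1) - (N * (1 + m) / (N + 1)) ^ 2
      = 2 * N ^ 2 * (1 + m) * (1 - N * m) / ((N + 1) ^ 2 * (N - 1)) := by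
    field_simp; ring
  have h0 : 0 ≤ 2 * N ^ 2 * (1 + m) * (1 - N * m) / ((N + 1) ^ 2 * (N - 1)) := by
    apply div_nonneg
    · exact mul_nonneg (mul_nonneg (by positivity) (by linarith)) (by linarith)
    · exact mul_nonneg (by positivity) (by linarith)
  linarith

lemma aux_cap2 {N m t q : ℝ} (hN : 2 ≤ N) (hm1 : -1 < m) (hmN : N * m < 1)
    (ht1 : -1 ≤ t) (ht2 : t ≤ m) (hq : q ≤ 1) :
    (q - t ^ 2) / (N ^ 2 * (1 - m ^ 2) / (N ^ 2 - 1))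
      + (t - (N * m - 1) / (N + 1)) ^ 2 / ((N * (1 + m) / (N + 1)) ^ 2) ≤ 1 := by
  have hm2 : m < 1 := by nlinarith
  set A2 := (N * (1 + m) / (N + 1)) ^ 2 with hA2def
  set B2 := N ^ 2 * (1 - m ^ 2) / (N ^ 2 - 1) with hB2def
  set σ := (N * m - 1) / (N + 1) with hσdef
  have hA2 : 0 < A2 := by
    have : 0 < N * (1 + m) / (N + 1) := div_pos (mul_pos (by linarith) (by linarith)) (by linarith)
    positivity
  have hB2 : 0 < B2 := by
    apply div_pos (mul_pos (by positivity) (by nlinarith : (0:ℝ) < 1 - m ^ 2))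
    nlinarith
  have hne1 : N + 1 ≠ 0 := by intro h; nlinarith [h]
  have hne2 : N - 1 ≠ 0 := by intro h; nlinarith [h]
  have hne3 : N ^ 2 - 1 ≠ 0 := by intro h; nlinarith [h]
  have hsub : B2 - A2 = 2 * N ^ 2 * (1 + m) * (1 - N * m) / ((N + 1) ^ 2 * (N - 1)) := by
    rw [hB2def, hA2def]; field_simp; ring
  have hle : A2 ≤ B2 := by
    have h0 : 0 ≤ 2 * N ^ 2 * (1 + m) * (1 - N * m) / ((N + 1) ^ 2 * (N - 1)) := by
      apply div_nonneg
      · exact mul_nonneg (mul_nonneg (by positivity) (by linarith)) (by linarith)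
      · exact mul_nonneg (by positivity) (by linarith)
    linarith
  have hid : (1 - t ^ 2) * A2 + (t - σ) ^ 2 * B2 - A2 * B2 = (B2 - A2) * (t + 1) * (t - m) := by
    rw [hB2def, hA2def, hσdef]; field_simp; ring
  have hrhs : (B2 - A2) * (t + 1) * (t - m) ≤ 0 := by
    apply mul_nonpos_of_nonneg_of_nonpos
    · apply mul_nonneg (by linarith) (by linarith)
    · linarith
  calc (q - t ^ 2) / B2 + (t - σ) ^ 2 / A2
      ≤ (1 - t ^ 2) / B2 + (t - σ) ^ 2 / A2 := by gcongr <;> linarith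
    _ ≤ 1 := by
        rw [div_add_div _ _ hB2.ne' hA2.ne', div_le_one (by positivity)]
        nlinarith [hid, hrhs]

lemma aux_K2 {N m : ℝ} {n : ℕ} (hn : 2 ≤ n) (hN : N = n) (hm1 : -1 < m) (hmN : N * m < 1) :
    (N ^ 2 * (1 - m ^ 2) / (N ^ 2 - 1)) ^ (n - 1) * (N * (1 + m) / (N + 1)) ^ 2 < 1 := by
  have hN2 : 2 ≤ N := by rw [hN]; exact_mod_cast hn
  have hm2 : m < 1 := by nlinarith
  set A := N * (1 + m) / (N + 1) with hAdef
  set B := N * (1 - m) / (N - 1) with hBdef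
  have hA : 0 < A := div_pos (mul_pos (by linarith) (by linarith)) (by linarith)
  have hB : 0 < B := div_pos (mul_pos (by linarith) (by linarith)) (by linarith)
  have hA1 : A < 1 := by
    rw [hAdef, div_lt_one (by linarith)]; nlinarith
  have hAB : N ^ 2 * (1 - m ^ 2) / (N ^ 2 - 1) = A * B := by
    have hne1 : N + 1 ≠ 0 := by intro h; nlinarith [h]
    have hne2 : N - 1 ≠ 0 := by intro h; nlinarith [h]
    have hne3 : N ^ 2 - 1 ≠ 0 := by intro h; nlinarith [h]
    rw [hAdef, hBdef]; field_simp; ring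
  rw [hAB, mul_pow, mul_assoc, mul_comm (B ^ (n-1)) (A ^ 2), ← mul_assoc, ← pow_add]
  have hexp : n - 1 + 2 = n + 1 := by omega
  rw [hexp]
  have hsum : ((n:ℝ) + 1) * (A - 1) + ((n:ℝ) - 1) * (B - 1) = 0 := by
    have h1 : ((n:ℝ) + 1) * A = N * (1 + m) := by
      rw [hAdef, ← hN]; field_simp
    have h2 : ((n:ℝ) - 1) * B = N * (1 - m) := by
      rw [hBdef, ← hN]
      have : N - 1 ≠ 0 := by linarith
      field_simp
    nlinarith [h1, h2]
  have hAe : A < Real.exp (A - 1) := by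
    have := Real.add_one_lt_exp (x := A - 1) (sub_ne_zero.2 hA1.ne)
    linarith
  have hBe : B ≤ Real.exp (B - 1) := by
    have := Real.add_one_le_exp (B - 1)
    linarith
  have hcast1 : ((n + 1 : ℕ) : ℝ) = (n:ℝ) + 1 := by push_cast; ring
  have hcast2 : ((n - 1 : ℕ) : ℝ) = (n:ℝ) - 1 := by
    have : 1 ≤ n := by omega
    push_cast [this]; ring
  calc A ^ (n + 1) * B ^ (n - 1)
      < Real.exp (A - 1) ^ (n + 1) * B ^ (n - 1) := by
        apply mul_lt_mul_of_pos_right _ (pow_pos hB _)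
        exact pow_lt_pow_left₀ hAe hA.le (by omega)
    _ ≤ Real.exp (A - 1) ^ (n + 1) * Real.exp (B - 1) ^ (n - 1) := by
        apply mul_le_mul_of_nonneg_left (pow_le_pow_left₀ hB.le hBe _)
        positivity
    _ = Real.exp (((n + 1 : ℕ):ℝ) * (A - 1)) * Real.exp (((n - 1 : ℕ):ℝ) * (B - 1)) := by
        rw [Real.exp_nat_mul, Real.exp_nat_mul]
    _ = 1 := by
        rw [← Real.exp_add, hcast1, hcast2, hsum, Real.exp_zero]

set_option linter.unusedSectionVars false
set_option maxHeartbeats 3000000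

theorem loewner_john_shrinkage (n : ℕ) (hn : 0 < n)
    (C : Set (Fin n → ℝ)) (hCcompact : IsCompact C) (hCconvex : Convex ℝ C)
    (hCint : (interior C).Nonempty)
    (c : Fin n → ℝ) (P : Matrix (Fin n) (Fin n) ℝ) (hPpd : P.PosDef)
    (hCE : C ⊆ {x : Fin n → ℝ | (x - c) ⬝ᵥ (P⁻¹ *ᵥ (x - c)) ≤ 1})
    (hmin : ∀ (c' : Fin n → ℝ) (Q : Matrix (Fin n) (Fin n) ℝ), Q.PosDef →
      C ⊆ {x : Fin n → ℝ | (x - c') ⬝ᵥ (Q⁻¹ *ᵥ (x - c')) ≤ 1} → P.det ≤ Q.det) :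
    (fun y => c + (1 / (n : ℝ)) • (y - c)) ''
        {x : Fin n → ℝ | (x - c) ⬝ᵥ (P⁻¹ *ᵥ (x - c)) ≤ 1} ⊆ C ∧
      C ⊆ {x : Fin n → ℝ | (x - c) ⬝ᵥ (P⁻¹ *ᵥ (x - c)) ≤ 1} := by
  refine ⟨?_, hCE⟩
  rintro z ⟨y, hy, rfl⟩
  by_contra hzC
  -- basic matrix facts about P
  have hPsym : Pᵀ = P := aux_sym_of_posdef hPpd
  have hPinv : P⁻¹.PosDef := hPpd.inv
  have hPisym : (P⁻¹)ᵀ = P⁻¹ := aux_sym_of_posdef hPinv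
  have hPdetU : IsUnit P.det := hPpd.det_pos.ne'.isUnit
  have hPP : P * P⁻¹ = 1 := mul_nonsing_inv P hPdetU
  have hPPl : P⁻¹ * P = 1 := nonsing_inv_mul P hPdetU
  -- separating hyperplane
  obtain ⟨f, β, hfC, hfz⟩ :=
    geometric_hahn_banach_closed_point hCconvex hCcompact.isClosed hzC
  beta_reduce at hfz
  set a : Fin n → ℝ := fun i => f (fun j => if i = j then 1 else 0) with hadef
  clear_value a
  have hfa : ∀ x, f x = a ⬝ᵥ x := by
    intro x
    rw [hadef]
    have h := LinearMap.pi_apply_eq_sum_univ (f : (Fin n → ℝ) →ₗ[ℝ] ℝ) x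
    simp only [ContinuousLinearMap.coe_coe] at h
    rw [h, dotProduct]
    exact Finset.sum_congr rfl fun i _ => by rw [smul_eq_mul, mul_comm]
  obtain ⟨x₀, hx₀i⟩ := hCint
  have hx₀ : x₀ ∈ C := interior_subset hx₀i
  have ha0 : a ≠ 0 := by
    intro h
    have h1 := hfC x₀ hx₀
    have h2 := hfz
    rw [hfa, h] at h1 h2
    simp only [zero_dotProduct] at h1 h2
    linarith only [h1, h2]
  set w := P *ᵥ a with hwdef
  set s := a ⬝ᵥ w with hsdef
  clear_value w s
  have hs : 0 < s := by
    rw [hsdef, hwdef]; exact aux_posdef_apply hPpd ha0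
  set r := Real.sqrt s with hrdef
  clear_value r
  have hr : 0 < r := by rw [hrdef]; exact Real.sqrt_pos.2 hs
  have hr2 : r ^ 2 = s := by rw [hrdef]; exact Real.sq_sqrt hs.le
  -- dot product identities
  have hwinv : ∀ e : Fin n → ℝ, w ⬝ᵥ (P⁻¹ *ᵥ e) = a ⬝ᵥ e := by
    intro e
    rw [hwdef, dotProduct_comm, aux_dot_sym hPsym, mulVec_mulVec, hPP, one_mulVec]
  have hcs : ∀ e : Fin n → ℝ, (a ⬝ᵥ e) ^ 2 ≤ s * (e ⬝ᵥ (P⁻¹ *ᵥ e)) := by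
    intro e
    have h := aux_cs hPinv w e
    rw [hwinv e, hwinv w, ← hsdef] at h
    exact h
  -- the depth of the cut
  have hyE : (y - c) ⬝ᵥ (P⁻¹ *ᵥ (y - c)) ≤ 1 := hy
  have hay : a ⬝ᵥ (y - c) ≤ r := by
    have h1 := hcs (y - c)
    have h2 : (a ⬝ᵥ (y - c)) ^ 2 ≤ r ^ 2 := by
      have h3 := mul_le_mul_of_nonneg_left hyE hs.le
      linarith only [h1, hr2, h3]
    nlinarith only [h2, hr, sq_nonneg (a ⬝ᵥ (y - c) - r)]
  have hNpos : (0 : ℝ) < n := by exact_mod_cast hn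
  have hz' : β < a ⬝ᵥ c + (1 / (n : ℝ)) * (a ⬝ᵥ (y - c)) := by
    have h := hfz
    rw [hfa] at h
    rwa [dotProduct_add, dotProduct_smul, smul_eq_mul] at h
  have hβ : β - a ⬝ᵥ c < r / n := by
    have h : (1 / (n : ℝ)) * (a ⬝ᵥ (y - c)) ≤ (1 / (n : ℝ)) * r :=
      mul_le_mul_of_nonneg_left hay (by positivity)
    have h2 : r / (n : ℝ) = (1 / (n : ℝ)) * r := by ring
    linarith only [hz', h, h2]
  set hv := (β - a ⬝ᵥ c) / r with hhvdef
  clear_value hv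
  have hhv : hv < 1 / n := by
    rw [hhvdef, div_lt_div_iff₀ hr hNpos]
    have h3 : (r / (n : ℝ)) * (n : ℝ) = r := div_mul_cancel₀ _ hNpos.ne'
    nlinarith only [hβ, hNpos, h3]
  set m := (max hv (-1) + 1 / (n : ℝ)) / 2 with hmdef
  clear_value m
  have hmaxlb : hv ≤ max hv (-1) := le_max_left _ _
  have hmaxlb2 : (-1 : ℝ) ≤ max hv (-1) := le_max_right _ _
  have hmaxub : max hv (-1) < 1 / n := by
    have h0 : (0:ℝ) < 1 / n := by positivity
    exact max_lt hhv (by linarith only [h0])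
  have hm1 : -1 < m := by
    rw [hmdef]
    have h0 : (0:ℝ) < 1 / n := by positivity
    linarith only [hmaxlb2, h0]
  have hmn : m < 1 / n := by rw [hmdef]; linarith only [hmaxub]
  have hvm : hv ≤ m := by rw [hmdef]; linarith only [hmaxlb, hmaxub]
  have hCm : ∀ x ∈ C, a ⬝ᵥ (x - c) ≤ m * r := by
    intro x hx
    have h1 : a ⬝ᵥ x < β := by rw [← hfa]; exact hfC x hx
    have h2 : a ⬝ᵥ (x - c) = a ⬝ᵥ x - a ⬝ᵥ c := by rw [dotProduct_sub]
    have h3 : β - a ⬝ᵥ c = hv * r := by rw [hhvdef, div_mul_cancel₀ _ hr.ne']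
    have h4 : hv * r ≤ m * r := mul_le_mul_of_nonneg_right hvm hr.le
    linarith only [h1, h2, h3, h4]
  -- constants
  set N := (n : ℝ) with hNdef
  clear_value N
  have hN1 : 1 ≤ N := by rw [hNdef]; exact_mod_cast hn
  have hNm : N * m < 1 := by
    rw [lt_div_iff₀ hNpos] at hmn
    linarith only [hmn]
  have hm2 : m < 1 := by nlinarith only [hN1, hNm, hm1]
  set σ := (N * m - 1) / (N + 1) with hσdef
  set A2 := (N * (1 + m) / (N + 1)) ^ 2 with hA2def
  set B2 := if n = 1 then (1 : ℝ) else N ^ 2 * (1 - m ^ 2) / (N ^ 2 - 1) with hB2def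
  clear_value σ A2 B2
  have hA2pos : 0 < A2 := by
    rw [hA2def]
    have : 0 < N * (1 + m) / (N + 1) :=
      div_pos (mul_pos (by linarith) (by linarith)) (by linarith)
    positivity
  have hN2 : ¬ n = 1 → 2 ≤ N := by
    intro h1
    have : 2 ≤ n := by omega
    rw [hNdef]; exact_mod_cast this
  have hB2pos : 0 < B2 := by
    rw [hB2def]; split_ifs with h1
    · norm_num
    · have hN2' := hN2 h1
      exact div_pos (mul_pos (by positivity) (by nlinarith only [hm1, hm2]))
        (by nlinarith only [hN2'])
  have hA2le : A2 ≤ B2 := by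
    rw [hB2def]; split_ifs with h1
    · have hN1' : N = 1 := by rw [hNdef, h1]; norm_num
      rw [hA2def, hN1']
      nlinarith only [hm1, hm2]
    · have hN2' := hN2 h1
      rw [hA2def]
      exact aux_A2B2 hN2' hm1 hNm
  have hA2ne : A2 ≠ 0 := hA2pos.ne'
  have hB2ne : B2 ≠ 0 := hB2pos.ne'
  have hsne : s ≠ 0 := hs.ne'
  set ν := (A2 - B2) / s with hνdef
  set μ := (B2 - A2) / (A2 * B2 * s) with hμdef
  clear_value ν μ
  have hνs : ν * s = A2 - B2 := by rw [hνdef]; exact div_mul_cancel₀ _ hsne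
  set Q := B2 • P + ν • vecMulVec w w with hQdef
  set R := B2⁻¹ • P⁻¹ + μ • vecMulVec a a with hRdef
  clear_value Q R
  -- Q is positive definite
  have hQsym : Qᵀ = Q := by
    rw [hQdef, transpose_add, transpose_smul, transpose_smul, hPsym, aux_vmv_transpose]
  have hwx : ∀ x, w ⬝ᵥ x = a ⬝ᵥ (P *ᵥ x) := by
    intro x
    rw [hwdef, dotProduct_comm, aux_dot_sym hPsym]
  have hQpd : Q.PosDef := by
    refine posDef_iff_dotProduct_mulVec.mpr ⟨?_, ?_⟩
    · show Qᴴ = Q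
      rw [conjTranspose_eq_transpose_of_trivial]
      exact hQsym
    · intro x hx
      have hQx : Q *ᵥ x = B2 • (P *ᵥ x) + ν • ((w ⬝ᵥ x) • w) := by
        rw [hQdef, add_mulVec, smul_mulVec, smul_mulVec, aux_vmv_mulVec]
      have hdot : x ⬝ᵥ (Q *ᵥ x) = B2 * (x ⬝ᵥ (P *ᵥ x)) + ν * (w ⬝ᵥ x) ^ 2 := by
        rw [hQx]
        simp only [dotProduct_add, dotProduct_smul, smul_eq_mul, dotProduct_comm x w]
        ring
      have hp : 0 < x ⬝ᵥ (P *ᵥ x) := aux_posdef_apply hPpd hx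
      have hcsx : (w ⬝ᵥ x) ^ 2 ≤ s * (x ⬝ᵥ (P *ᵥ x)) := by
        rw [hwx x]
        have h := aux_cs hPpd a x
        rw [← hwdef, ← hsdef] at h
        exact h
      have hνle : ν ≤ 0 := by
        rw [hνdef]
        exact div_nonpos_of_nonpos_of_nonneg (by linarith only [hA2le]) hs.le
      have hνsp : ν * s * (x ⬝ᵥ (P *ᵥ x)) = (A2 - B2) * (x ⬝ᵥ (P *ᵥ x)) := by rw [hνs]
      have hkey : 0 < x ⬝ᵥ (Q *ᵥ x) := by
        rw [hdot]
        linarith only [mul_nonneg (neg_nonneg.2 hνle) (sub_nonneg.2 hcsx),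
          mul_pos hA2pos hp, hνsp]
      simpa using hkey
  -- inverse of Q
  have hPiw : P⁻¹ *ᵥ w = a := by rw [hwdef, mulVec_mulVec, hPPl, one_mulVec]
  have hQR : Q * R = 1 := by
    rw [hQdef, hRdef, add_mul, mul_add, mul_add]
    have t1 : (B2 • P) * (B2⁻¹ • P⁻¹) = (1 : Matrix (Fin n) (Fin n) ℝ) := by
      rw [Matrix.smul_mul, Matrix.mul_smul, hPP, smul_smul, mul_inv_cancel₀ hB2ne, one_smul]
    have t2 : (B2 • P) * (μ • vecMulVec a a) = (B2 * μ) • vecMulVec w a := by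
      rw [Matrix.smul_mul, Matrix.mul_smul, aux_mul_vmv, smul_smul, ← hwdef]
    have t3 : (ν • vecMulVec w w) * (B2⁻¹ • P⁻¹) = (ν * B2⁻¹) • vecMulVec w a := by
      rw [Matrix.smul_mul, Matrix.mul_smul, aux_vmv_mul, hPisym, hPiw, smul_smul]
    have t4 : (ν • vecMulVec w w) * (μ • vecMulVec a a) = (ν * (μ * s)) • vecMulVec w a := by
      rw [Matrix.smul_mul, Matrix.mul_smul, aux_vmv_mul_vmv, smul_smul, smul_smul,
        dotProduct_comm w a, ← hsdef, mul_assoc]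
    rw [t1, t2, t3, t4, add_assoc, ← add_smul, ← add_smul]
    have hco : B2 * μ + (ν * B2⁻¹ + ν * (μ * s)) = 0 := by
      rw [hμdef, hνdef]
      field_simp
      ring
    rw [hco, zero_smul, add_zero]
  have hQinv : Q⁻¹ = R := inv_eq_right_inv hQR
  -- determinant of Q
  have hdetQ : Q.det = B2 ^ (n - 1) * A2 * P.det := by
    set S := B2 • (1 : Matrix (Fin n) (Fin n) ℝ) + ν • vecMulVec a w with hSdef
    clear_value S
    have hfac : Q = P * S := by
      rw [hSdef, mul_add, Matrix.mul_smul, Matrix.mul_smul, mul_one, aux_mul_vmv, ← hwdef,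
        hQdef]
    have hS2 : S = B2 • ((1 : Matrix (Fin n) (Fin n) ℝ) + (ν / B2) • vecMulVec a w) := by
      rw [hSdef, smul_add, smul_smul]
      congr 2
      field_simp
    have hcol : (ν / B2) • vecMulVec a w = replicateCol Unit ((ν / B2) • a) * replicateRow Unit w := by
      rw [aux_smul_vmv, vecMulVec_eq Unit]
    have hSdet : S.det = B2 ^ (n - 1) * A2 := by
      rw [hS2, det_smul, hcol, det_one_add_replicateCol_mul_replicateRow, dotProduct_smul, smul_eq_mul,
        Fintype.card_fin]
      have hwa : w ⬝ᵥ a = s := by rw [dotProduct_comm, ← hsdef]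
      rw [hwa]
      have hBn : B2 ^ n = B2 ^ (n - 1) * B2 := by
        rw [← pow_succ, Nat.sub_add_cancel hn]
      rw [hBn]
      have : B2 * (1 + ν / B2 * s) = A2 := by
        field_simp
        linarith only [hνs]
      rw [mul_assoc, this]
    rw [hfac, det_mul, hSdet]
    ring
  -- containment of C in the new ellipsoid
  set c' := c + (σ / r) • w with hc'def
  clear_value c'
  have hsub : C ⊆ {x : Fin n → ℝ | (x - c') ⬝ᵥ (Q⁻¹ *ᵥ (x - c')) ≤ 1} := by
    intro x hx
    simp only [Set.mem_setOf_eq]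
    rw [hQinv, hRdef]
    have hq1 : (x - c) ⬝ᵥ (P⁻¹ *ᵥ (x - c)) ≤ 1 := hCE hx
    set e := x - c with hedef
    set q := e ⬝ᵥ (P⁻¹ *ᵥ e) with hqdef
    set g := a ⬝ᵥ e with hgdef
    clear_value e q g
    have hd : x - c' = e - (σ / r) • w := by
      rw [hc'def, hedef]
      abel
    rw [hd]
    have h1 : e ⬝ᵥ (P⁻¹ *ᵥ w) = g := by rw [aux_dot_sym hPisym, hwinv e, ← hgdef]
    have h2 : w ⬝ᵥ (P⁻¹ *ᵥ e) = g := by rw [hwinv e, ← hgdef]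
    have h3 : w ⬝ᵥ (P⁻¹ *ᵥ w) = s := by rw [hwinv w, ← hsdef]
    have h4 : a ⬝ᵥ w = s := hsdef.symm
    have hexp : (e - (σ / r) • w) ⬝ᵥ ((B2⁻¹ • P⁻¹ + μ • vecMulVec a a) *ᵥ (e - (σ / r) • w))
        = B2⁻¹ * (q - 2 * (σ / r) * g + (σ / r) ^ 2 * s) + μ * (g - (σ / r) * s) ^ 2 :=
      aux_expand P⁻¹ a w e B2⁻¹ μ (σ / r) q g s h1 h2 h3 h4 hqdef.symm hgdef.symm
    rw [hexp]
    set t := g / r with htdef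
    clear_value t
    have hg : g = t * r := by rw [htdef]; exact (div_mul_cancel₀ g hr.ne').symm
    have hEq : B2⁻¹ * (q - 2 * (σ / r) * g + (σ / r) ^ 2 * s) + μ * (g - (σ / r) * s) ^ 2
        = (q - t ^ 2) / B2 + (t - σ) ^ 2 / A2 := by
      rw [hμdef, hg, ← hr2]
      have hrne : r ≠ 0 := hr.ne'
      field_simp
      ring
    rw [hEq]
    have hgs : g ^ 2 ≤ s * q := by
      have h := hcs e
      rwa [← hqdef, ← hgdef] at h
    have ht2q : t ^ 2 ≤ q := by
      rw [htdef, div_pow, hr2, div_le_iff₀ hs]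
      linarith only [hgs]
    have htm' : t ≤ m := by
      rw [htdef, div_le_iff₀ hr, hgdef, hedef]
      exact hCm x hx
    have ht1 : -1 ≤ t := by nlinarith only [ht2q, hq1, sq_nonneg (t + 1)]
    by_cases h1 : n = 1
    · have hB2eq : B2 = 1 := by rw [hB2def, if_pos h1]
      have hqt : q ≤ t ^ 2 := by
        have hdim := aux_dim1 h1 P hPpd a e
        rw [← hwdef, ← hsdef, ← hqdef, ← hgdef] at hdim
        rw [htdef, div_pow, hr2, le_div_iff₀ hs]
        linarith only [hdim]
      have hN1' : N = 1 := by rw [hNdef, h1]; norm_num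
      have hbound : (t - σ) ^ 2 / A2 ≤ 1 := by
        rw [div_le_one hA2pos, hσdef, hA2def, hN1']
        linarith only [mul_nonneg (sub_nonneg.2 htm')
          (by linarith only [ht1] : (0:ℝ) ≤ 1 + t)]
      rw [hB2eq]
      have h5 : (q - t ^ 2) / 1 ≤ 0 := by rw [div_one]; linarith only [hqt]
      linarith only [h5, hbound]
    · have hN2' := hN2 h1
      have hB2eq : B2 = N ^ 2 * (1 - m ^ 2) / (N ^ 2 - 1) := by rw [hB2def, if_neg h1]
      rw [hB2eq, hσdef, hA2def]
      exact aux_cap2 hN2' hm1 hNm ht1 htm' hq1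
  -- conclude
  have hle := hmin c' Q hQpd hsub
  rw [hdetQ] at hle
  have hK : B2 ^ (n - 1) * A2 < 1 := by
    by_cases h1 : n = 1
    · have : n - 1 = 0 := by omega
      rw [this, pow_zero, one_mul]
      have hN1' : N = 1 := by rw [hNdef, h1]; norm_num
      rw [hA2def, hN1']
      nlinarith only [hm1, hm2]
    · have h2n : 2 ≤ n := by omega
      have hB2eq : B2 = N ^ 2 * (1 - m ^ 2) / (N ^ 2 - 1) := by rw [hB2def, if_neg h1]
      rw [hB2eq, hA2def]
      exact aux_K2 h2n hNdef hm1 hNm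
  linarith only [hle, mul_pos (sub_pos.2 hK) hPpd.det_pos]
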